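/- arXiv:1604.07047 — 3 statements merged into one kernel-verified Lean document; each statement's English description precedes it below -/
import Mathlib

section
/- Let a ∈ 𝔹_N with a ≠ 0, set α = -a/√(aa*) ∈ ∂𝔹_N. Then b_a(z) - b_a(α) = [ (z-α)( a*a·(1-√(1-aa*))/(aa*) - I_N ) + z(αa*) - α(za*) ] · √(1-aa*) / ( (1-za*)(1+√(aa*)) ) for all z ∈ 𝔹_N. -/
open Matrix
open scoped ComplexConjugate

/-- `zw* = Σ_u z_u conj(w_u)`. -/
noncomputable def rowInner {N : ℕ} (z w : Fin N → ℂ) : ℂ := ∑ u, z u * conj (w u)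

lemma norm_rowInner_lt_one {N : ℕ} (a z : Fin N → ℂ) (ha : (∑ u, ‖a u‖ ^ 2) < 1)
    (hz : (∑ u, ‖z u‖ ^ 2) < 1) : ‖rowInner z a‖ < 1 := by
  have h1 : ‖rowInner z a‖ ≤ ∑ u, ‖z u‖ * ‖a u‖ := by
    refine (norm_sum_le _ _).trans_eq (Finset.sum_congr rfl fun u _ => ?_)
    rw [norm_mul, RCLike.norm_conj]
  have h2 : (∑ u, ‖z u‖ * ‖a u‖) ^ 2 ≤ (∑ u, ‖z u‖ ^ 2) * (∑ u, ‖a u‖ ^ 2) :=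
    Finset.sum_mul_sq_le_sq_mul_sq Finset.univ _ _
  have hza : (0:ℝ) ≤ ∑ u, ‖z u‖ * ‖a u‖ := Finset.sum_nonneg fun u _ => by positivity
  have hAnn : (0:ℝ) ≤ ∑ u, ‖a u‖ ^ 2 := Finset.sum_nonneg fun u _ => by positivity
  have hZnn : (0:ℝ) ≤ ∑ u, ‖z u‖ ^ 2 := Finset.sum_nonneg fun u _ => by positivity
  nlinarith

lemma sum_mul_conj {N : ℕ} (a : Fin N → ℂ) : ∑ u, a u * conj (a u) = ((∑ u, ‖a u‖ ^ 2 : ℝ) : ℂ) := by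
  push_cast
  refine Finset.sum_congr rfl fun u _ => ?_
  rw [Complex.mul_conj']

/-- Rudin's formula for the `ℂ^{1×N}`-valued Blaschke factor:
`b_a(z) = (a - (za*/aa*)a - √(1-aa*)(z - (za*/aa*)a))/(1-za*)`. -/
noncomputable def blaschkeR {N : ℕ} (a z : Fin N → ℂ) : Fin N → ℂ :=
  (1 - rowInner z a)⁻¹ •
    (a - (rowInner z a / ((∑ u, ‖a u‖ ^ 2 : ℝ) : ℂ)) • a
       - (Real.sqrt (1 - (∑ u, ‖a u‖ ^ 2)) : ℂ) •
           (z - (rowInner z a / ((∑ u, ‖a u‖ ^ 2 : ℝ) : ℂ)) • a))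

lemma key (S T w au zu : ℂ) (hS : S ≠ 0) (h1S : 1 + S ≠ 0) (h1w : 1 - w ≠ 0)
    (hT : T ^ 2 = 1 - S ^ 2) :
    (1 - w)⁻¹ * (au - (w / S ^ 2) * au - T * (zu - (w / S ^ 2) * au)) - au / S
      = (T / ((1 - w) * (1 + S))) *
          ((1 - T) / S ^ 2 * (w + S) * au - (zu + au / S) + (-S) * zu - w * (-(au / S))) := by
  rw [eq_comm, div_mul_eq_mul_div T ((1 - w) * (1 + S)), div_eq_iff (mul_ne_zero h1w h1S)]
  field_simp
  linear_combination (au * (-(w*S) - w*S^5 + w*S^6 + w^2*S^5 - S^2 - S^6) + au * (w*S + S^2) + au * (w*S^5 - w*S^6 - w - w^2*S^5 - S + S^6)) * hT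

/-- The explicit formula for `b_a(z) - b_a(α)` with `α = -a/√(aa*)`. -/
theorem blaschke_difference_formula {N : ℕ} (a : Fin N → ℂ) (ha : a ≠ 0)
    (haball : (∑ u, ‖a u‖ ^ 2) < 1) (z : Fin N → ℂ) (hz : (∑ u, ‖z u‖ ^ 2) < 1) :
    blaschkeR a z - blaschkeR a (fun u => -(a u) / (Real.sqrt (∑ v, ‖a v‖ ^ 2) : ℂ))
      = ((Real.sqrt (1 - (∑ u, ‖a u‖ ^ 2)) : ℂ) /
          ((1 - rowInner z a) * (1 + (Real.sqrt (∑ u, ‖a u‖ ^ 2) : ℂ)))) •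
        (Matrix.vecMul
            (fun u => z u - (-(a u) / (Real.sqrt (∑ v, ‖a v‖ ^ 2) : ℂ)))
            ((((1 - Real.sqrt (1 - (∑ u, ‖a u‖ ^ 2))) / (∑ u, ‖a u‖ ^ 2) : ℝ) : ℂ) •
              Matrix.vecMulVec (star a) a - 1)
          + rowInner (fun u => -(a u) / (Real.sqrt (∑ v, ‖a v‖ ^ 2) : ℂ)) a • z
          - rowInner z a • (fun u => -(a u) / (Real.sqrt (∑ v, ‖a v‖ ^ 2) : ℂ))) := by
  set A : ℝ := ∑ u, ‖a u‖ ^ 2 with hA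
  have hApos : 0 < A := by
    have : ∃ u, a u ≠ 0 := Function.ne_iff.mp ha
    obtain ⟨u, hu⟩ := this
    exact Finset.sum_pos' (fun v _ => by positivity) ⟨u, Finset.mem_univ u, pow_pos (norm_pos_iff.mpr hu) 2⟩
  set s : ℝ := Real.sqrt A with hsdef
  set t : ℝ := Real.sqrt (1 - A) with htdef
  have hspos : 0 < s := Real.sqrt_pos.mpr hApos
  have hs2 : (s:ℂ) ^ 2 = (A:ℂ) := by
    rw [← Complex.ofReal_pow, Real.sq_sqrt hApos.le]
  have ht2 : (t:ℂ) ^ 2 = 1 - (A:ℂ) := by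
    rw [← Complex.ofReal_pow, Real.sq_sqrt (by linarith)]
    push_cast; ring
  have hS : (s:ℂ) ≠ 0 := by exact_mod_cast hspos.ne'
  have h1S : 1 + (s:ℂ) ≠ 0 := by
    intro h
    have : (s:ℂ) = -1 := by linear_combination h
    have hs' : s = -1 := by exact_mod_cast this
    linarith
  set w : ℂ := rowInner z a with hw
  have hwlt : ‖w‖ < 1 := norm_rowInner_lt_one a z haball hz
  have h1w : 1 - w ≠ 0 := by
    intro h
    have : w = 1 := by linear_combination -h
    rw [this] at hwlt; simp at hwlt
  set α : Fin N → ℂ := fun u => -(a u) / (s:ℂ) with hα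
  have hrα : rowInner α a = -(s:ℂ) := by
    rw [rowInner]
    have : ∀ u, α u * conj (a u) = -(s:ℂ)⁻¹ * (a u * conj (a u)) := by
      intro u; rw [hα]; field_simp
    rw [Finset.sum_congr rfl fun u _ => this u, ← Finset.mul_sum, sum_mul_conj, ← hA, ← hs2]
    field_simp
  have hbα : blaschkeR a α = fun u => a u / (s:ℂ) := by
    funext u
    simp only [blaschkeR, hrα, ← hA, Pi.smul_apply, Pi.sub_apply, smul_eq_mul]
    simp only [hα]
    rw [← hs2]
    field_simp
    have hD : ((s:ℂ)^5 + (s:ℂ)^6) ≠ 0 := by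
      have he : ((s:ℂ)^5 + (s:ℂ)^6) = (s:ℂ)^5 * (1 + (s:ℂ)) := by ring
      rw [he]; exact mul_ne_zero (pow_ne_zero _ hS) h1S
    linear_combination (a u) * mul_inv_cancel₀ h1S
  have hvm : ∀ u, Matrix.vecMul (fun u => z u - α u)
      ((((1 - t) / A : ℝ) : ℂ) • Matrix.vecMulVec (star a) a - 1) u
      = (((1 - t) / A : ℝ) : ℂ) * ((w + (s:ℂ)) * a u) - (z u - α u) := by
    intro u
    simp only [Matrix.vecMul, dotProduct, Matrix.sub_apply, Matrix.smul_apply,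
      Matrix.vecMulVec_apply, Matrix.one_apply, smul_eq_mul, Pi.star_apply, mul_sub,
      Finset.sum_sub_distrib, mul_ite, mul_one, mul_zero, Finset.sum_ite_eq',
      Complex.star_def]
    have hsum : ∑ x, (z x - α x) * conj (a x) = w + (s:ℂ) := by
      have he : ∑ x, (z x - α x) * conj (a x) = rowInner z a - rowInner α a := by
        simp [rowInner, sub_mul, Finset.sum_sub_distrib]
      rw [he, hrα, ← hw]; ring
    have he2 : ∑ x, (z x - α x) * (((1 - t) / A : ℝ) * ((starRingEnd ℂ) (a x) * a u) : ℂ)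
        = (((1 - t) / A : ℝ) : ℂ) * ((∑ x, (z x - α x) * conj (a x)) * a u) := by
      rw [Finset.sum_mul, Finset.mul_sum]
      exact Finset.sum_congr rfl fun x _ => by ring
    rw [he2, hsum]
    simp
  funext u
  rw [show (fun u => z u - -a u / (s:ℂ)) = fun u => z u - α u from rfl]
  simp only [Pi.sub_apply, Pi.add_apply, Pi.smul_apply, smul_eq_mul, hbα, hvm u, hrα, ← hw]
  simp only [blaschkeR, Pi.smul_apply, Pi.sub_apply, smul_eq_mul, ← hA, ← hw, ← htdef]
  push_cast
  rw [← hs2]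
  simp only [hα]
  have hT' : ((t:ℂ)) ^ 2 = 1 - ((s:ℂ)) ^ 2 := by rw [ht2, hs2]
  linear_combination key (s:ℂ) (t:ℂ) w (a u) (z u) hS h1S h1w hT'
end

section
/- Let a ∈ 𝔹_N, a ≠ 0, α = -a/‖a‖. Then for every z ∈ 𝔹_N, ‖b_a(z) - b_a(α)‖ ≤ 4√(1-‖a‖²)/(1-‖z‖). -/
open Matrix
open scoped ComplexConjugate

noncomputable def eE {N : ℕ} (x : Fin N → ℂ) : EuclideanSpace ℂ (Fin N) :=
  (WithLp.equiv 2 (Fin N → ℂ)).symm x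

lemma norm_eE {N : ℕ} (x : Fin N → ℂ) : ‖eE x‖ = Real.sqrt (∑ u, ‖x u‖ ^ 2) := by
  simp [EuclideanSpace.norm_eq, eE]

lemma eE_sub {N : ℕ} (x y : Fin N → ℂ) : eE (x - y) = eE x - eE y := rfl
lemma eE_smul {N : ℕ} (c : ℂ) (x : Fin N → ℂ) : eE (c • x) = c • eE x := rfl

lemma rowInner_eq_inner {N : ℕ} (z w : Fin N → ℂ) :
    rowInner z w = inner (𝕜 := ℂ) (eE w) (eE z) := by
  simp [rowInner, PiLp.inner_apply, eE, mul_comm]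

lemma rowInner_self {N : ℕ} (a : Fin N → ℂ) :
    rowInner a a = ((∑ u, ‖a u‖ ^ 2 : ℝ) : ℂ) := by
  simp [rowInner, Complex.mul_conj, Complex.normSq_eq_norm_sq]

set_option maxHeartbeats 1000000 in
/-- The bound `‖b_a(z) - b_a(α)‖ ≤ 4√(1-‖a‖²)/(1-‖z‖)` with `α = -a/‖a‖`. -/
theorem blaschke_difference_bound {N : ℕ} (a : Fin N → ℂ) (ha : a ≠ 0)
    (haball : (∑ u, ‖a u‖ ^ 2) < 1) (z : Fin N → ℂ) (hz : (∑ u, ‖z u‖ ^ 2) < 1) :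
    Real.sqrt (∑ u, ‖(blaschkeR a z
        - blaschkeR a (fun v => -(a v) / (Real.sqrt (∑ v', ‖a v'‖ ^ 2) : ℂ))) u‖ ^ 2)
      ≤ 4 * Real.sqrt (1 - (∑ u, ‖a u‖ ^ 2))
          / (1 - Real.sqrt (∑ u, ‖z u‖ ^ 2)) := by
  classical
  set A : ℝ := ∑ u, ‖a u‖ ^ 2 with hAdef
  have hA0 : 0 < A := by
    obtain ⟨u, hu⟩ : ∃ u, a u ≠ 0 := by
      by_contra h; push_neg at h; exact ha (funext h)
    exact Finset.sum_pos' (fun i _ => pow_nonneg (norm_nonneg _) 2) ⟨u, Finset.mem_univ u, pow_pos (norm_pos_iff.mpr hu) 2⟩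
  set s : ℝ := Real.sqrt A with hsdef
  have hs2 : s ^ 2 = A := Real.sq_sqrt hA0.le
  have hs0 : 0 < s := Real.sqrt_pos.mpr hA0
  have hs1 : s < 1 := by nlinarith [hs0.le]
  have hsc : ((s : ℂ)) ≠ 0 := by exact_mod_cast hs0.ne'
  have hAc : ((A : ℝ) : ℂ) = (s : ℂ) ^ 2 := by exact_mod_cast hs2.symm
  have hAcne : ((A : ℝ) : ℂ) ≠ 0 := by exact_mod_cast hA0.ne'
  set α : Fin N → ℂ := fun v => -(a v) / (s : ℂ) with hαdef
  -- rowInner α a = -s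
  have hrα : rowInner α a = -(s : ℂ) := by
    have : rowInner α a = (-(s:ℂ)⁻¹) * rowInner a a := by
      simp only [rowInner, hαdef, Finset.mul_sum]
      refine Finset.sum_congr rfl fun u _ => by field_simp
    rw [this, rowInner_self a, ← hAdef, hAc]
    field_simp
  -- b_a(α) = s⁻¹ • a
  have hbα : blaschkeR a α = (s : ℂ)⁻¹ • a := by
    funext v
    simp only [blaschkeR, ← hAdef, hrα, Pi.smul_apply, Pi.sub_apply, smul_eq_mul, hαdef, hAc]
    have h1s : (1 : ℂ) + (s:ℂ) ≠ 0 := by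
      intro h
      have hs1' : (s:ℂ) = -1 := by linear_combination h
      have hre := congrArg Complex.re hs1'
      simp at hre
      linarith
    simp only [← hαdef, hrα]
    rw [sub_neg_eq_add]
    field_simp [h1s]
    have hne : (s:ℂ)^5 + (s:ℂ)^6 ≠ 0 := by
      have h56 : (s:ℂ)^5 + (s:ℂ)^6 = (s:ℂ)^5 * (1 + s) := by ring
      rw [h56]; exact mul_ne_zero (pow_ne_zero _ hsc) h1s
    linear_combination
  set lam : ℂ := rowInner z a with hlamdef
  set t : ℝ := Real.sqrt (∑ u, ‖z u‖ ^ 2) with htdef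
  have ht0 : 0 ≤ t := Real.sqrt_nonneg _
  have ht1 : t < 1 := by
    have h := Real.sqrt_lt_sqrt (Finset.sum_nonneg fun i _ => pow_nonneg (norm_nonneg _) 2) hz
    rw [Real.sqrt_one] at h
    exact h
  have hlam_le : ‖lam‖ ≤ s * t := by
    rw [hlamdef, rowInner_eq_inner]
    calc ‖inner (𝕜 := ℂ) (eE a) (eE z)‖ ≤ ‖eE a‖ * ‖eE z‖ := norm_inner_le_norm _ _
    _ = s * t := by rw [norm_eE, norm_eE, ← hAdef, ← hsdef, ← htdef]
  have hlam_lt : ‖lam‖ < 1 := lt_of_le_of_lt hlam_le (by nlinarith)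
  have h1lam_ge : 1 - t ≤ ‖(1 : ℂ) - lam‖ := by
    have h := norm_sub_norm_le (1 : ℂ) lam
    have h1 : ‖(1:ℂ)‖ = 1 := norm_one
    nlinarith
  have h1lam_pos : 0 < ‖(1 : ℂ) - lam‖ := lt_of_lt_of_le (by linarith) h1lam_ge
  have h1lam_ne : (1 : ℂ) - lam ≠ 0 := fun h => by simp [h] at h1lam_pos
  -- the key algebraic identity
  set q : ℝ := Real.sqrt (1 - A) with hqdef
  have hq0 : 0 ≤ q := Real.sqrt_nonneg _
  set c : ℂ := ((s:ℂ) - 1)/(s:ℂ) + lam * ((s:ℂ) - 1)/((A:ℝ):ℂ) + (q:ℂ) * lam/((A:ℝ):ℂ)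
    with hcdef
  have hM : blaschkeR a z - (s:ℂ)⁻¹ • a
      = (1 - lam)⁻¹ • (c • a - (q:ℂ) • z) := by
    funext v
    simp only [blaschkeR, ← hAdef, ← hlamdef, ← hqdef, Pi.smul_apply, Pi.sub_apply,
      smul_eq_mul, hAc]
    have hW : (a v - lam / (s:ℂ)^2 * a v - (q:ℂ) * (z v - lam / (s:ℂ)^2 * a v))
        - (1 - lam) * ((s:ℂ)⁻¹ * a v) = c * a v - (q:ℂ) * z v := by
      rw [hcdef, hAc]
      field_simp
      ring
    rw [← hW]
    linear_combination ((s:ℂ)⁻¹ * a v) * mul_inv_cancel₀ h1lam_ne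
  -- norm bounds
  have hnormc : ‖c‖ ≤ (1 - s)/s + s * (1 - s)/A + q * s/A := by
    have e1 : ‖((s:ℂ) - 1)/(s:ℂ)‖ = (1 - s)/s := by
      rw [norm_div, show ((s:ℂ) - 1) = ((s - 1 : ℝ) : ℂ) by push_cast; ring,
        Complex.norm_real, Complex.norm_real, Real.norm_eq_abs, Real.norm_eq_abs,
        abs_of_nonpos (by linarith : s - 1 ≤ 0), abs_of_pos hs0]
      ring
    have e2 : ‖lam * ((s:ℂ) - 1)/((A:ℝ):ℂ)‖ ≤ s * (1 - s)/A := by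
      rw [norm_div, norm_mul, show ((s:ℂ) - 1) = ((s - 1 : ℝ) : ℂ) by push_cast; ring]
      simp only [Complex.norm_real, Real.norm_eq_abs,
        abs_of_nonpos (by linarith : s - 1 ≤ 0), abs_of_pos hA0]
      have : ‖lam‖ ≤ s := by nlinarith
      have h1 : ‖lam‖ * (-(s-1)) ≤ s * (1 - s) := by nlinarith
      exact div_le_div_of_nonneg_right h1 hA0.le
    have e3 : ‖(q:ℂ) * lam/((A:ℝ):ℂ)‖ ≤ q * s/A := by
      rw [norm_div, norm_mul]
      simp only [Complex.norm_real, Real.norm_eq_abs, abs_of_nonneg hq0, abs_of_pos hA0]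
      have : ‖lam‖ ≤ s := by nlinarith
      have h1 : q * ‖lam‖ ≤ q * s := by nlinarith
      exact div_le_div_of_nonneg_right h1 hA0.le
    calc ‖c‖ ≤ ‖((s:ℂ) - 1)/(s:ℂ) + lam * ((s:ℂ) - 1)/((A:ℝ):ℂ)‖ + ‖(q:ℂ) * lam/((A:ℝ):ℂ)‖ :=
          norm_add_le _ _
      _ ≤ (‖((s:ℂ) - 1)/(s:ℂ)‖ + ‖lam * ((s:ℂ) - 1)/((A:ℝ):ℂ)‖) + ‖(q:ℂ) * lam/((A:ℝ):ℂ)‖ := by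
          gcongr; exact norm_add_le _ _
      _ ≤ (1 - s)/s + s * (1 - s)/A + q * s/A := by rw [e1]; linarith [e2, e3]
  have hnormM : ‖eE (c • a - (q:ℂ) • z)‖ ≤ 4 * q := by
    have hna : ‖eE a‖ = s := by rw [norm_eE, ← hAdef, ← hsdef]
    have hnz : ‖eE z‖ = t := by rw [norm_eE, ← htdef]
    have h1 : ‖eE (c • a - (q:ℂ) • z)‖ ≤ ‖c‖ * s + q * t := by
      rw [eE_sub, eE_smul, eE_smul]
      calc ‖c • eE a - (q:ℂ) • eE z‖ ≤ ‖c • eE a‖ + ‖(q:ℂ) • eE z‖ := norm_sub_le _ _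
        _ = ‖c‖ * s + q * t := by
            rw [norm_smul, norm_smul, hna, hnz]; simp [abs_of_nonneg hq0]
    have hcs : ‖c‖ * s ≤ 2 * (1 - s) + q := by
      have hmul := mul_le_mul_of_nonneg_right hnormc hs0.le
      have expand : ((1 - s)/s + s * (1 - s)/A + q * s/A) * s = 2 * (1 - s) + q := by
        rw [← hs2]; field_simp; ring
      rw [expand] at hmul
      exact hmul
    have hsq : 1 - s ≤ q := by
      have h1 : 1 - s ≤ 1 - A := by nlinarith
      have h2 : 1 - A ≤ q := by
        rw [hqdef]
        nlinarith [Real.sq_sqrt (by linarith : (0:ℝ) ≤ 1 - A), Real.sqrt_nonneg (1 - A),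
          haball]
      linarith
    nlinarith
  -- put it together
  have hrw : blaschkeR a z - blaschkeR a α = blaschkeR a z - (s:ℂ)⁻¹ • a := by rw [hbα]
  have hα' : (fun v => -(a v) / (Real.sqrt (∑ v', ‖a v'‖ ^ 2) : ℂ)) = α := rfl
  rw [← norm_eE, hrw, hM, eE_smul, norm_smul]
  have hinv : ‖(1 - lam)⁻¹‖ ≤ (1 - t)⁻¹ := by
    rw [norm_inv]
    exact inv_anti₀ (by linarith) h1lam_ge
  calc ‖(1 - lam)⁻¹‖ * ‖eE (c • a - (q:ℂ) • z)‖ ≤ (1 - t)⁻¹ * (4 * q) := by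
        apply mul_le_mul hinv hnormM (norm_nonneg _) (inv_nonneg.mpr (by linarith))
    _ = 4 * q / (1 - t) := by ring
end

section
/- (Cauchy property of partial Blaschke products) With F_k = [I|0] partial isometries (‖F_k‖ = 1, ‖ZF_k‖ = ‖Z‖), A_k matrices with K := Σ_{k=1}^∞ ‖A_k‖ < ∞, and Z_m = (F_1+A_1)⋯(F_m+A_m), for m₂ > m₁: ‖Z_{m₂} - Z_{m₁}F_{m₁+1}⋯F_{m₂}‖ ≤ e^{2K} Σ_{k=m₁+1}^{m₂} ‖A_k‖. In particular, after the natural isometric embeddings i_m into ℓ², the sequence (i_m(Z_m)) is Cauchy in ℓ². -/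
open Matrix
open scoped Matrix.Norms.L2Operator

/-- The ordered product `G₁ G₂ ⋯ G_m` of matrices of compatible (growing) sizes. -/
noncomputable def matProd (p : ℕ → ℕ)
    (G : ∀ k : ℕ, Matrix (Fin (p k)) (Fin (p (k + 1))) ℂ) :
    ∀ m : ℕ, Matrix (Fin (p 0)) (Fin (p m)) ℂ
  | 0 => 1
  | (m + 1) => matProd p G m * G m

/-- The ordered product `G_{m₁+1} ⋯ G_{m₁+d}`. -/
noncomputable def matProdFrom (p : ℕ → ℕ)
    (G : ∀ k : ℕ, Matrix (Fin (p k)) (Fin (p (k + 1))) ℂ) (m₁ : ℕ) :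
    ∀ d : ℕ, Matrix (Fin (p m₁)) (Fin (p (m₁ + d))) ℂ
  | 0 => (1 : Matrix (Fin (p m₁)) (Fin (p m₁)) ℂ)
  | (d + 1) => matProdFrom p G m₁ d * G (m₁ + d)

/-- The canonical partial isometry `F_k = (I | 0)`. -/
def embMat (p : ℕ → ℕ) (k : ℕ) : Matrix (Fin (p k)) (Fin (p (k + 1))) ℂ :=
  Matrix.of fun i j => if (i : ℕ) = (j : ℕ) then 1 else 0

/-- The row vector `Z_m ∈ ℂ^{1×p_m}` padded by zeros into a sequence. -/
noncomputable def padRow (p : ℕ → ℕ)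
    (G : ∀ k : ℕ, Matrix (Fin (p k)) (Fin (p (k + 1))) ℂ) (m j : ℕ) : ℂ :=
  if h : j < p m then ∑ i : Fin (p 0), matProd p G m i ⟨j, h⟩ else 0

/-! ### Auxiliary lemmas -/

lemma myNormOneLe (n : ℕ) : ‖(1 : Matrix (Fin n) (Fin n) ℂ)‖ ≤ 1 := by
  rw [Matrix.cstar_norm_def, _root_.map_one, ContinuousLinearMap.one_def]
  exact ContinuousLinearMap.norm_id_le

lemma mySumIte {n : ℕ} (i : ℕ) (hi : i < n) (f : Fin n → ℂ) :
    ∑ t : Fin n, (if i = (t : ℕ) then 1 else 0) * f t = f ⟨i, hi⟩ := by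
  rw [Finset.sum_eq_single (⟨i, hi⟩ : Fin n)]
  · simp
  · intro b _ hb
    rw [if_neg, zero_mul]
    exact fun h => hb (by simp [Fin.ext_iff, ← h])
  · simp

lemma mySumIte' {n : ℕ} (j : ℕ) (f : Fin n → ℂ) :
    ∑ t : Fin n, f t * (if (t : ℕ) = j then 1 else 0) = if h : j < n then f ⟨j, h⟩ else 0 := by
  split_ifs with h
  · rw [Finset.sum_eq_single (⟨j, h⟩ : Fin n)]
    · simp
    · intro b _ hb
      rw [if_neg, mul_zero]
      exact fun hbj => hb (by simp [Fin.ext_iff, hbj])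
    · simp
  · exact Finset.sum_eq_zero fun t _ => by
      rw [if_neg, mul_zero]; exact fun ht => h (ht ▸ t.2)

lemma embMat_mul_conjTranspose (p : ℕ → ℕ) (hp : ∀ k, p k ≤ p (k + 1)) (k : ℕ) :
    embMat p k * (embMat p k)ᴴ = 1 := by
  ext i i'
  rw [Matrix.mul_apply]
  simp only [embMat, Matrix.conjTranspose_apply, Matrix.of_apply]
  rw [show (∑ j : Fin (p (k+1)), (if (i:ℕ) = (j:ℕ) then 1 else 0) *
      star (if (i':ℕ) = (j:ℕ) then 1 else 0)) =
      star (if (i':ℕ) = (i:ℕ) then (1:ℂ) else 0) from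
    mySumIte (i : ℕ) (lt_of_lt_of_le i.2 (hp k)) _]
  simp [Matrix.one_apply, Fin.ext_iff, eq_comm]

lemma embMat_norm_le (p : ℕ → ℕ) (hp : ∀ k, p k ≤ p (k + 1)) (k : ℕ) :
    ‖embMat p k‖ ≤ 1 := by
  have h1 := Matrix.l2_opNorm_conjTranspose_mul_self (embMat p k)ᴴ
  rw [Matrix.conjTranspose_conjTranspose, embMat_mul_conjTranspose p hp k] at h1
  have h2 := myNormOneLe (p k)
  have h3 := Matrix.l2_opNorm_conjTranspose (embMat p k)
  have h4 : (0:ℝ) ≤ ‖(embMat p k)ᴴ‖ := norm_nonneg _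
  nlinarith [norm_nonneg (embMat p k)]

lemma matProd_split (p : ℕ → ℕ) (G : ∀ k : ℕ, Matrix (Fin (p k)) (Fin (p (k + 1))) ℂ)
    (m₁ : ℕ) : ∀ d : ℕ, matProd p G (m₁ + d) = matProd p G m₁ * matProdFrom p G m₁ d
  | 0 => by simp [matProdFrom]
  | (d + 1) => by
      show matProd p G (m₁ + d) * G (m₁ + d) = _
      rw [matProd_split p G m₁ d, Matrix.mul_assoc]
      rfl

lemma matProdFrom_embMat (p : ℕ → ℕ) (hp : ∀ k, p k ≤ p (k + 1)) (m₁ : ℕ) :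
    ∀ d : ℕ, matProdFrom p (embMat p) m₁ d
      = Matrix.of fun (i : Fin (p m₁)) (j : Fin (p (m₁ + d))) =>
          if (i : ℕ) = (j : ℕ) then 1 else 0
  | 0 => by
      ext i j
      simp [matProdFrom, Matrix.one_apply, Fin.ext_iff]
  | (d + 1) => by
      have hmono : p m₁ ≤ p (m₁ + d) := by
        clear * - hp
        induction d with
        | zero => exact le_of_eq rfl
        | succ d ih => exact le_trans ih (hp (m₁ + d))
      show matProdFrom p (embMat p) m₁ d * embMat p (m₁ + d) = _
      rw [matProdFrom_embMat p hp m₁ d]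
      ext i j
      rw [Matrix.mul_apply]
      simp only [embMat, Matrix.of_apply]
      rw [mySumIte (i : ℕ) (lt_of_lt_of_le i.2 hmono)
        (fun t => if (t:ℕ) = (j:ℕ) then (1:ℂ) else 0)]

section NormBounds

variable (p : ℕ → ℕ) (hp : ∀ k, p k ≤ p (k + 1))
  (A : ∀ k : ℕ, Matrix (Fin (p k)) (Fin (p (k + 1))) ℂ)
include hp

lemma normQ_le (m₁ : ℕ) : ∀ d : ℕ, ‖matProdFrom p (embMat p) m₁ d‖ ≤ 1
  | 0 => myNormOneLe _
  | (d + 1) => by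
      calc ‖matProdFrom p (embMat p) m₁ d * embMat p (m₁ + d)‖
          ≤ ‖matProdFrom p (embMat p) m₁ d‖ * ‖embMat p (m₁ + d)‖ :=
            Matrix.l2_opNorm_mul _ _
        _ ≤ 1 * 1 := mul_le_mul (normQ_le m₁ d) (embMat_norm_le p hp _) (norm_nonneg _)
            zero_le_one
        _ = 1 := one_mul 1

lemma normP_le (m₁ : ℕ) : ∀ d : ℕ,
    ‖matProdFrom p (fun k => embMat p k + A k) m₁ d‖
      ≤ ∏ k ∈ Finset.Ico m₁ (m₁ + d), (1 + ‖A k‖)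
  | 0 => by simpa [matProdFrom] using myNormOneLe (p m₁)
  | (d + 1) => by
      have hsplit : ∏ k ∈ Finset.Ico m₁ (m₁ + (d + 1)), (1 + ‖A k‖)
          = (∏ k ∈ Finset.Ico m₁ (m₁ + d), (1 + ‖A k‖)) * (1 + ‖A (m₁ + d)‖) :=
        Finset.prod_Ico_succ_top (Nat.le_add_right m₁ d) _
      rw [hsplit]
      calc ‖matProdFrom p (fun k => embMat p k + A k) m₁ d * (embMat p (m₁ + d) + A (m₁ + d))‖
          ≤ ‖matProdFrom p (fun k => embMat p k + A k) m₁ d‖ * ‖embMat p (m₁ + d) + A (m₁ + d)‖ :=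
            Matrix.l2_opNorm_mul _ _
        _ ≤ (∏ k ∈ Finset.Ico m₁ (m₁ + d), (1 + ‖A k‖)) * (1 + ‖A (m₁ + d)‖) := by
            apply mul_le_mul (normP_le m₁ d) _ (norm_nonneg _)
              (Finset.prod_nonneg fun k _ => by positivity)
            exact le_trans (norm_add_le _ _) (by
              have := embMat_norm_le p hp (m₁ + d); linarith)

lemma normDiff_le (m₁ : ℕ) : ∀ d : ℕ,
    ‖matProdFrom p (fun k => embMat p k + A k) m₁ d - matProdFrom p (embMat p) m₁ d‖
      ≤ (∏ k ∈ Finset.Ico m₁ (m₁ + d), (1 + ‖A k‖)) - 1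
  | 0 => by simp [matProdFrom]
  | (d + 1) => by
      have key : matProdFrom p (fun k => embMat p k + A k) m₁ (d + 1)
          - matProdFrom p (embMat p) m₁ (d + 1)
          = (matProdFrom p (fun k => embMat p k + A k) m₁ d - matProdFrom p (embMat p) m₁ d)
              * (embMat p (m₁ + d) + A (m₁ + d))
            + matProdFrom p (embMat p) m₁ d * A (m₁ + d) := by
        show matProdFrom p (fun k => embMat p k + A k) m₁ d * (embMat p (m₁ + d) + A (m₁ + d))
          - matProdFrom p (embMat p) m₁ d * embMat p (m₁ + d) = _
        rw [Matrix.sub_mul, Matrix.mul_add, Matrix.mul_add]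
        abel
      have hsplit : ∏ k ∈ Finset.Ico m₁ (m₁ + (d + 1)), (1 + ‖A k‖)
          = (∏ k ∈ Finset.Ico m₁ (m₁ + d), (1 + ‖A k‖)) * (1 + ‖A (m₁ + d)‖) :=
        Finset.prod_Ico_succ_top (Nat.le_add_right m₁ d) _
      rw [key, hsplit]
      have h1 := normDiff_le m₁ d
      have h2 := normQ_le p hp m₁ d
      have h3 : ‖embMat p (m₁ + d) + A (m₁ + d)‖ ≤ 1 + ‖A (m₁ + d)‖ :=
        le_trans (norm_add_le _ _) (by have := embMat_norm_le p hp (m₁ + d); linarith)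
      have h4 : (1:ℝ) ≤ ∏ k ∈ Finset.Ico m₁ (m₁ + d), (1 + ‖A k‖) := by
        calc (1:ℝ) = ∏ _k ∈ Finset.Ico m₁ (m₁ + d), (1:ℝ) := Finset.prod_const_one.symm
          _ ≤ _ := Finset.prod_le_prod (fun _ _ => zero_le_one)
              (fun k _ => by linarith [norm_nonneg (A k)])
      calc ‖_ + _‖ ≤ ‖(matProdFrom p (fun k => embMat p k + A k) m₁ d
                - matProdFrom p (embMat p) m₁ d) * (embMat p (m₁ + d) + A (m₁ + d))‖
              + ‖matProdFrom p (embMat p) m₁ d * A (m₁ + d)‖ := norm_add_le _ _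
        _ ≤ ((∏ k ∈ Finset.Ico m₁ (m₁ + d), (1 + ‖A k‖)) - 1) * (1 + ‖A (m₁ + d)‖)
              + 1 * ‖A (m₁ + d)‖ := by
            apply add_le_add
            · exact le_trans (Matrix.l2_opNorm_mul _ _)
                (mul_le_mul h1 h3 (norm_nonneg _) (by linarith))
            · exact le_trans (Matrix.l2_opNorm_mul _ _)
                (mul_le_mul h2 le_rfl (norm_nonneg _) zero_le_one)
        _ ≤ (∏ k ∈ Finset.Ico m₁ (m₁ + d), (1 + ‖A k‖)) * (1 + ‖A (m₁ + d)‖) - 1 := by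
            nlinarith [norm_nonneg (A (m₁ + d))]

lemma normZ_le : ∀ m : ℕ,
    ‖matProd p (fun k => embMat p k + A k) m‖ ≤ ∏ k ∈ Finset.range m, (1 + ‖A k‖)
  | 0 => by simpa [matProd] using myNormOneLe (p 0)
  | (m + 1) => by
      rw [Finset.prod_range_succ]
      calc ‖matProd p (fun k => embMat p k + A k) m * (embMat p m + A m)‖
          ≤ ‖matProd p (fun k => embMat p k + A k) m‖ * ‖embMat p m + A m‖ :=
            Matrix.l2_opNorm_mul _ _
        _ ≤ (∏ k ∈ Finset.range m, (1 + ‖A k‖)) * (1 + ‖A m‖) := by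
            apply mul_le_mul (normZ_le m) _ (norm_nonneg _)
              (Finset.prod_nonneg fun k _ => by positivity)
            exact le_trans (norm_add_le _ _) (by have := embMat_norm_le p hp m; linarith)

end NormBounds

lemma myExpSub (S : ℝ) : Real.exp S - 1 ≤ S * Real.exp S := by
  have h1 : Real.exp (-S) * Real.exp S = 1 := by rw [← Real.exp_add]; simp
  have h2 : 1 - S ≤ Real.exp (-S) := by linarith [Real.add_one_le_exp (-S)]
  nlinarith [Real.exp_pos S, mul_le_mul_of_nonneg_right h2 (Real.exp_pos S).le]

lemma myProdLeExp (a : ℕ → ℝ) (ha : ∀ k, 0 ≤ a k) (s : Finset ℕ) :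
    ∏ k ∈ s, (1 + a k) ≤ Real.exp (∑ k ∈ s, a k) := by
  calc ∏ k ∈ s, (1 + a k) ≤ ∏ k ∈ s, Real.exp (a k) :=
        Finset.prod_le_prod (fun k _ => by linarith [ha k])
          (fun k _ => by linarith [Real.add_one_le_exp (a k)])
    _ = Real.exp (∑ k ∈ s, a k) := (Real.exp_sum s a).symm

lemma myRowNormLe {a b : ℕ} (M : Matrix (Fin a) (Fin b) ℂ) (i₀ : Fin a) :
    Real.sqrt (∑ j : Fin b, ‖M i₀ j‖ ^ 2) ≤ ‖M‖ := by
  have h := Matrix.l2_opNorm_mulVec Mᴴ (EuclideanSpace.single i₀ (1:ℂ))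
  rw [EuclideanSpace.norm_single, norm_one, mul_one, Matrix.l2_opNorm_conjTranspose] at h
  have hv : ∀ j, (Mᴴ *ᵥ (EuclideanSpace.single i₀ (1:ℂ))) j = star (M i₀ j) := by
    intro j
    simp [Matrix.mulVec, dotProduct, Matrix.conjTranspose_apply, EuclideanSpace.single_apply]
  rw [EuclideanSpace.norm_eq] at h
  refine le_trans (le_of_eq ?_) h
  congr 1
  exact Finset.sum_congr rfl fun j _ => by
    rw [show ((EuclideanSpace.equiv (Fin b) ℂ).symm
      (Mᴴ *ᵥ (EuclideanSpace.single i₀ (1:ℂ)))) j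
      = (Mᴴ *ᵥ (EuclideanSpace.single i₀ (1:ℂ))) j from rfl, hv j, norm_star]

/-- Cauchy property of the partial Blaschke products: for `m₂ = m₁ + d > m₁`,
`‖Z_{m₂} - Z_{m₁} F_{m₁+1}⋯F_{m₂}‖ ≤ e^{2K} Σ_{k=m₁+1}^{m₂} ‖A_k‖` with
`K = Σ ‖A_k‖`, and the zero-padded embeddings of the `Z_m` into `ℓ²` form a Cauchy
sequence. -/
theorem partial_products_cauchy (p : ℕ → ℕ)
    (hp : ∀ k, p k ≤ p (k + 1)) (hp0 : p 0 = 1)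
    (A : ∀ k : ℕ, Matrix (Fin (p k)) (Fin (p (k + 1))) ℂ)
    (hK : Summable (fun k => ‖A k‖)) :
    (∀ m₁ d : ℕ, 0 < d →
      ‖matProd p (fun k => embMat p k + A k) (m₁ + d)
          - matProd p (fun k => embMat p k + A k) m₁ * matProdFrom p (embMat p) m₁ d‖
        ≤ Real.exp (2 * ∑' k : ℕ, ‖A k‖) * ∑ k ∈ Finset.Ico m₁ (m₁ + d), ‖A k‖) ∧
    ∀ ε > (0 : ℝ), ∃ M : ℕ, ∀ m₁ m₂ : ℕ, M ≤ m₁ → M ≤ m₂ →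
      Real.sqrt (∑' j : ℕ,
          ‖padRow p (fun k => embMat p k + A k) m₂ j
            - padRow p (fun k => embMat p k + A k) m₁ j‖ ^ 2) < ε := by
  have hmonop : ∀ {m n : ℕ}, m ≤ n → p m ≤ p n := fun h => monotone_nat_of_le_succ hp h
  have key : ∀ m₁ d : ℕ,
      ‖matProd p (fun k => embMat p k + A k) (m₁ + d)
          - matProd p (fun k => embMat p k + A k) m₁ * matProdFrom p (embMat p) m₁ d‖
        ≤ Real.exp (2 * ∑' k : ℕ, ‖A k‖) * ∑ k ∈ Finset.Ico m₁ (m₁ + d), ‖A k‖ := by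
    intro m₁ d
    set K := ∑' k : ℕ, ‖A k‖ with hKdef
    set S := ∑ k ∈ Finset.Ico m₁ (m₁ + d), ‖A k‖ with hSdef
    have hS0 : 0 ≤ S := Finset.sum_nonneg fun k _ => norm_nonneg _
    have hSK : S ≤ K := Summable.sum_le_tsum _ (fun k _ => norm_nonneg _) hK
    have hRK : ∑ k ∈ Finset.range m₁, ‖A k‖ ≤ K := Summable.sum_le_tsum _ (fun k _ => norm_nonneg _) hK
    rw [matProd_split p _ m₁ d, ← Matrix.mul_sub]
    have hZ : ‖matProd p (fun k => embMat p k + A k) m₁‖ ≤ Real.exp K :=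
      le_trans (normZ_le p hp A m₁) (le_trans (myProdLeExp _ (fun k => norm_nonneg _) _)
        (Real.exp_le_exp.2 hRK))
    have hPQ : ‖matProdFrom p (fun k => embMat p k + A k) m₁ d - matProdFrom p (embMat p) m₁ d‖
        ≤ S * Real.exp K := by
      refine le_trans (normDiff_le p hp A m₁ d) ?_
      have h1 : ∏ k ∈ Finset.Ico m₁ (m₁ + d), (1 + ‖A k‖) ≤ Real.exp S :=
        myProdLeExp _ (fun k => norm_nonneg _) _
      have h2 := myExpSub S
      have h3 : S * Real.exp S ≤ S * Real.exp K :=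
        mul_le_mul_of_nonneg_left (Real.exp_le_exp.2 hSK) hS0
      linarith
    calc ‖matProd p (fun k => embMat p k + A k) m₁
            * (matProdFrom p (fun k => embMat p k + A k) m₁ d - matProdFrom p (embMat p) m₁ d)‖
        ≤ ‖matProd p (fun k => embMat p k + A k) m₁‖
            * ‖matProdFrom p (fun k => embMat p k + A k) m₁ d - matProdFrom p (embMat p) m₁ d‖ :=
          Matrix.l2_opNorm_mul _ _
      _ ≤ Real.exp K * (S * Real.exp K) :=
          mul_le_mul hZ hPQ (norm_nonneg _) (Real.exp_pos K).le
      _ = Real.exp (2 * K) * S := by rw [two_mul, Real.exp_add]; ring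
  refine ⟨fun m₁ d _ => key m₁ d, ?_⟩
  intro ε hε
  set E := Real.exp (2 * ∑' k : ℕ, ‖A k‖) with hE
  have hE0 : 0 < E := Real.exp_pos _
  have hcs : CauchySeq (fun n => ∑ k ∈ Finset.range n, ‖A k‖) :=
    hK.hasSum.tendsto_sum_nat.cauchySeq
  rw [Metric.cauchySeq_iff'] at hcs
  obtain ⟨N, hN⟩ := hcs (ε / E) (by positivity)
  refine ⟨N, ?_⟩
  have i₀ : Fin (p 0) := ⟨0, by omega⟩
  haveI : Unique (Fin (p 0)) :=
    ⟨⟨⟨0, by omega⟩⟩, fun a => by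
      apply Fin.ext
      have := a.2
      show (a : ℕ) = 0
      omega⟩
  have main : ∀ m₁ m₂ : ℕ, N ≤ m₁ → N ≤ m₂ → m₁ ≤ m₂ →
      Real.sqrt (∑' j : ℕ,
          ‖padRow p (fun k => embMat p k + A k) m₂ j
            - padRow p (fun k => embMat p k + A k) m₁ j‖ ^ 2) < ε := by
    intro m₁ m₂ h1 h2 hle
    obtain ⟨d, rfl⟩ := Nat.exists_eq_add_of_le hle
    set Z := matProd p (fun k => embMat p k + A k) with hZdef
    set D := Z (m₁ + d) - Z m₁ * matProdFrom p (embMat p) m₁ d with hDdef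
    have hpad : ∀ j : ℕ,
        padRow p (fun k => embMat p k + A k) (m₁ + d) j
          - padRow p (fun k => embMat p k + A k) m₁ j
        = if h : j < p (m₁ + d) then D default ⟨j, h⟩ else 0 := by
      intro j
      have hmul : ∀ (h : j < p (m₁ + d)),
          (Z m₁ * matProdFrom p (embMat p) m₁ d) default ⟨j, h⟩
          = if h' : j < p m₁ then Z m₁ default ⟨j, h'⟩ else 0 := by
        intro h
        rw [Matrix.mul_apply, matProdFrom_embMat p hp m₁ d]
        simpa using mySumIte' j (fun t => Z m₁ default t)
      by_cases h : j < p (m₁ + d)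
      · rw [dif_pos h]
        rw [hDdef, Matrix.sub_apply, hmul h]
        simp only [padRow, hZdef]
        rw [dif_pos h]
        by_cases h' : j < p m₁
        · rw [dif_pos h', dif_pos h', Fintype.sum_unique, Fintype.sum_unique]
        · rw [dif_neg h', dif_neg h', Fintype.sum_unique]
      · rw [dif_neg h]
        have h' : ¬ j < p m₁ := fun hh => h (lt_of_lt_of_le hh (hmonop (Nat.le_add_right m₁ d)))
        simp only [padRow]
        rw [dif_neg h, dif_neg h']
        ring
    have hsum : (∑' j : ℕ,
        ‖padRow p (fun k => embMat p k + A k) (m₁ + d) j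
          - padRow p (fun k => embMat p k + A k) m₁ j‖ ^ 2)
        = ∑ j : Fin (p (m₁ + d)), ‖D default j‖ ^ 2 := by
      rw [tsum_eq_sum (s := Finset.range (p (m₁ + d)))
        (fun j hj => by
          rw [hpad j, dif_neg (by simpa using hj)]
          simp)]
      rw [← Fin.sum_univ_eq_sum_range]
      refine Finset.sum_congr rfl fun j _ => ?_
      rw [hpad (j : ℕ), dif_pos j.2]
    rw [hsum]
    have hrow := myRowNormLe D default
    have hkey := key m₁ d
    have hSlt : ∑ k ∈ Finset.Ico m₁ (m₁ + d), ‖A k‖ < ε / E := by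
      have hd1 := hN (m₁ + d) (le_trans h1 (Nat.le_add_right m₁ d))
      rw [Real.dist_eq] at hd1
      have hmono_s : ∑ k ∈ Finset.range N, ‖A k‖ ≤ ∑ k ∈ Finset.range m₁, ‖A k‖ :=
        Finset.sum_le_sum_of_subset_of_nonneg (Finset.range_subset_range.2 h1)
          (fun k _ _ => norm_nonneg _)
      have hico : ∑ k ∈ Finset.Ico m₁ (m₁ + d), ‖A k‖
          = ∑ k ∈ Finset.range (m₁ + d), ‖A k‖ - ∑ k ∈ Finset.range m₁, ‖A k‖ := by
        rw [Finset.sum_Ico_eq_sub _ (Nat.le_add_right m₁ d)]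
      rw [hico]
      have habs := abs_lt.1 hd1
      linarith [habs.2]
    calc Real.sqrt (∑ j : Fin (p (m₁ + d)), ‖D default j‖ ^ 2)
        ≤ ‖D‖ := hrow
      _ ≤ E * ∑ k ∈ Finset.Ico m₁ (m₁ + d), ‖A k‖ := hkey
      _ < E * (ε / E) := by
          exact mul_lt_mul_of_pos_left hSlt hE0
      _ = ε := by field_simp
  intro m₁ m₂ h1 h2
  rcases le_total m₁ m₂ with h | h
  · exact main m₁ m₂ h1 h2 h
  · have heq : (∑' j : ℕ,
        ‖padRow p (fun k => embMat p k + A k) m₂ j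
          - padRow p (fun k => embMat p k + A k) m₁ j‖ ^ 2)
        = ∑' j : ℕ,
        ‖padRow p (fun k => embMat p k + A k) m₁ j
          - padRow p (fun k => embMat p k + A k) m₂ j‖ ^ 2 :=
      tsum_congr fun j => by rw [norm_sub_rev]
    rw [heq]
    exact main m₂ m₁ h2 h1 h
end
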